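/- Let Λ be a finite-dimensional algebra over ℂ with symmetric Ext¹ dimensions, and let X, T be modules with X ⊕ T rigid, X indecomposable. Let f : T' → X be a surjective minimal right add(T)-approximation with kernel Y. If Ext¹(T ⊕ Y, T ⊕ Y) = 0 and Ext¹(X, Y) is one-dimensional, then the short exact sequence 0 → Y → T' → X → 0 is non-split and is, up to isomorphism of extensions, the unique non-split extension of X by Y. -/

import Mathlib

open CategoryTheory Opposite Module

/-- `Ext¹_Λ(M, N)` as a `ℂ`-vector space, for a finite-dimensional `ℂ`-algebra `Λ`. -/
noncomputable def ext1 (Λ : Type) [Ring Λ] [Algebra ℂ Λ] (M N : ModuleCat Λ) :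
    ModuleCat ℂ :=
  ((Ext ℂ (ModuleCat Λ) 1).obj (op M)).obj N

/-- `X ∈ add T`: `X` is a direct summand of a finite direct sum of copies of `T`. -/
def IsAddSummand (Λ : Type) [Ring Λ] (T : Type) [AddCommGroup T] [Module Λ T]
    (X : Type) [AddCommGroup X] [Module Λ X] : Prop :=
  ∃ (n : ℕ) (ι : X →ₗ[Λ] (Fin n → T)) (ρ : (Fin n → T) →ₗ[Λ] X), ρ ∘ₗ ι = LinearMap.id

section AuxHelpers

open CategoryTheory Limits

set_option linter.unusedSectionVars false

variable (Λ : Type) [Ring Λ] [Algebra ℂ Λ]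

lemma aux_subsingleton_of_isZero {V : ModuleCat ℂ} (h : IsZero V) : Subsingleton V := by
  constructor
  intro a b
  have h1 : (𝟙 V : V ⟶ V) = 0 := h.eq_of_src _ _
  have : ∀ x : V, x = 0 := fun x => by
    calc x = (𝟙 V : V ⟶ V) x := rfl
    _ = (0 : V ⟶ V) x := by rw [h1]
    _ = 0 := rfl
  rw [this a, this b]

lemma aux_ext1_retract_left {M M' N : ModuleCat Λ} (s : M' ⟶ M) (r : M ⟶ M')
    (hsr : s ≫ r = 𝟙 M') (h : Subsingleton (ext1 Λ M N)) : Subsingleton (ext1 Λ M' N) := by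
  constructor
  intro x y
  have key : (Ext ℂ (ModuleCat Λ) 1).map r.op ≫ (Ext ℂ (ModuleCat Λ) 1).map s.op
      = 𝟙 _ := by
    rw [← CategoryTheory.Functor.map_comp, ← op_comp, hsr, op_id,
      CategoryTheory.Functor.map_id]
  have key2 := congrArg (fun (t : (Ext ℂ (ModuleCat Λ) 1).obj (op M') ⟶
      (Ext ℂ (ModuleCat Λ) 1).obj (op M')) => t.app N) key
  simp only [NatTrans.comp_app, NatTrans.id_app] at key2
  have hx : x = (((Ext ℂ (ModuleCat Λ) 1).map s.op).app N)
      ((((Ext ℂ (ModuleCat Λ) 1).map r.op).app N) x) := by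
    conv_lhs => rw [show x = (𝟙 ((((Ext ℂ (ModuleCat Λ) 1).obj (op M'))).obj N)) x from rfl]
    rw [← key2]
    rfl
  have hy : y = (((Ext ℂ (ModuleCat Λ) 1).map s.op).app N)
      ((((Ext ℂ (ModuleCat Λ) 1).map r.op).app N) y) := by
    conv_lhs => rw [show y = (𝟙 ((((Ext ℂ (ModuleCat Λ) 1).obj (op M'))).obj N)) y from rfl]
    rw [← key2]
    rfl
  rw [hx, hy]
  congr 1
  exact h.elim _ _

lemma aux_ext1_retract_right {M N N' : ModuleCat Λ} (s : N' ⟶ N) (r : N ⟶ N')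
    (hsr : s ≫ r = 𝟙 N') (h : Subsingleton (ext1 Λ M N)) : Subsingleton (ext1 Λ M N') := by
  constructor
  intro x y
  have key : ((Ext ℂ (ModuleCat Λ) 1).obj (op M)).map s ≫
      ((Ext ℂ (ModuleCat Λ) 1).obj (op M)).map r = 𝟙 _ := by
    rw [← CategoryTheory.Functor.map_comp, hsr, CategoryTheory.Functor.map_id]
  have hx : x = (((Ext ℂ (ModuleCat Λ) 1).obj (op M)).map r)
      ((((Ext ℂ (ModuleCat Λ) 1).obj (op M)).map s) x) := by
    conv_lhs => rw [show x = (𝟙 (((Ext ℂ (ModuleCat Λ) 1).obj (op M)).obj N')) x from rfl]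
    rw [← key]
    rfl
  have hy : y = (((Ext ℂ (ModuleCat Λ) 1).obj (op M)).map r)
      ((((Ext ℂ (ModuleCat Λ) 1).obj (op M)).map s) y) := by
    conv_lhs => rw [show y = (𝟙 (((Ext ℂ (ModuleCat Λ) 1).obj (op M)).obj N')) y from rfl]
    rw [← key]
    rfl
  rw [hx, hy]
  congr 1
  exact h.elim _ _

/-- Factoring a linear map through a surjection. -/
lemma aux_exists_factor {A B C' : Type} [AddCommGroup A] [AddCommGroup B] [AddCommGroup C']
    [Module Λ A] [Module Λ B] [Module Λ C'] (π : A →ₗ[Λ] B) (ω : A →ₗ[Λ] C')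
    (hπ : Function.Surjective π) (hle : LinearMap.ker π ≤ LinearMap.ker ω) :
    ∃ g : B →ₗ[Λ] C', g ∘ₗ π = ω := by
  let e := π.quotKerEquivOfSurjective hπ
  refine ⟨(LinearMap.ker π).liftQ ω hle ∘ₗ (e.symm : B →ₗ[Λ] A ⧸ LinearMap.ker π), ?_⟩
  ext a
  have he : e (Submodule.Quotient.mk a) = π a := by
    simp [e, LinearMap.quotKerEquivOfSurjective, LinearMap.quotKerEquivRange_apply_mk]
  have h2 : e.symm (π a) = Submodule.Quotient.mk a := by
    rw [← he, LinearEquiv.symm_apply_apply]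
  simp [h2]

/-- `Ext¹` into a subsingleton module vanishes. -/
lemma aux_ext1_subsingleton_of_right (M N : ModuleCat Λ) (hN : Subsingleton N) :
    Subsingleton (ext1 Λ M N) := by
  let P := ProjectiveResolution.of M
  have hsub : Subsingleton ((P.complex.linearYonedaObj ℂ N).X 1) := by
    refine ⟨fun a b => ?_⟩
    exact ModuleCat.hom_ext (LinearMap.ext fun x => hN.elim _ _)
  have hzero : IsZero ((P.complex.linearYonedaObj ℂ N).X 1) :=
    ModuleCat.isZero_of_subsingleton _
  have hexact : (P.complex.linearYonedaObj ℂ N).ExactAt 1 := by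
    rw [HomologicalComplex.exactAt_iff]
    exact ShortComplex.exact_of_isZero_X₂ _ hzero
  have hIsZero : IsZero ((P.complex.linearYonedaObj ℂ N).homology 1) :=
    ((P.complex.linearYonedaObj ℂ N).exactAt_iff_isZero_homology 1).1 hexact
  have hsub2 : Subsingleton ((P.complex.linearYonedaObj ℂ N).homology 1) :=
    aux_subsingleton_of_isZero hIsZero
  exact Equiv.subsingleton (P.isoExt 1 N).toLinearEquiv.toEquiv

/-- If `Ext¹(T, Y) = 0` then maps from `T` lift along surjections with kernel `Y`. -/
lemma aux_lift_of_ext1_vanish (T Y E Z : Type) [AddCommGroup T] [Module Λ T]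
    [AddCommGroup Y] [Module Λ Y] [AddCommGroup E] [Module Λ E]
    [AddCommGroup Z] [Module Λ Z]
    (hext : Subsingleton (ext1 Λ (ModuleCat.of Λ T) (ModuleCat.of Λ Y)))
    (i' : Y →ₗ[Λ] E) (p' : E →ₗ[Λ] Z) (hi' : Function.Injective i')
    (hp' : Function.Surjective p')
    (hker' : LinearMap.range i' = LinearMap.ker p') (u : T →ₗ[Λ] Z) :
    ∃ h : T →ₗ[Λ] E, p' ∘ₗ h = u := by
  classical
  set 𝕋 := ModuleCat.of Λ T with h𝕋
  set 𝕐 := ModuleCat.of Λ Y with h𝕐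
  let P := ProjectiveResolution.of 𝕋
  let K := P.complex.linearYonedaObj ℂ 𝕐
  -- exactness of the Hom complex at degree 1
  haveI hext' : Subsingleton (((Ext ℂ (ModuleCat Λ) 1).obj (op 𝕋)).obj 𝕐) := hext
  have hsub : Subsingleton (K.homology 1) :=
    Equiv.subsingleton ((P.isoExt 1 𝕐).symm.toLinearEquiv.toEquiv)
  have hIsZero : IsZero (K.homology 1) := ModuleCat.isZero_of_subsingleton _
  have hexactAt : K.ExactAt 1 := (K.exactAt_iff_isZero_homology 1).2 hIsZero
  have hexact : (K.sc' 0 1 2).Exact := (K.exactAt_iff' 0 1 2 (by simp) (by simp)).1 hexactAt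
  -- basic maps
  haveI hp'epi : Epi (ModuleCat.ofHom p' : ModuleCat.of Λ E ⟶ ModuleCat.of Λ Z) :=
    (ModuleCat.epi_iff_surjective _).2 hp'
  let π₀ : P.complex.X 0 ⟶ 𝕋 := P.π.f 0
  let u₀ : P.complex.X 0 ⟶ ModuleCat.of Λ E :=
    Projective.factorThru (π₀ ≫ ModuleCat.ofHom u) (ModuleCat.ofHom p')
  have hu₀ : u₀ ≫ ModuleCat.ofHom p' = π₀ ≫ ModuleCat.ofHom u :=
    Projective.factorThru_comp _ _
  -- view morphisms as linear maps
  let π₀' : (P.complex.X 0 : Type) →ₗ[Λ] T := π₀.hom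
  let u₀' : (P.complex.X 0 : Type) →ₗ[Λ] E := u₀.hom
  let d₁' : (P.complex.X 1 : Type) →ₗ[Λ] (P.complex.X 0 : Type) := (P.complex.d 1 0).hom
  let d₂' : (P.complex.X 2 : Type) →ₗ[Λ] (P.complex.X 1 : Type) := (P.complex.d 2 1).hom
  have hu₀e : ∀ x : P.complex.X 0, p' (u₀' x) = u (π₀' x) := by
    intro x
    exact congrArg (fun (t : P.complex.X 0 ⟶ ModuleCat.of Λ Z) => t x) hu₀
  have hd₁π₀ : ∀ x, π₀' (d₁' x) = 0 := by
    intro x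
    exact congrArg (fun (t : P.complex.X 1 ⟶ 𝕋) => t x) P.complex_d_comp_π_f_zero
  have hdd : ∀ x, d₁' (d₂' x) = 0 := by
    intro x
    exact congrArg (fun (t : P.complex.X 2 ⟶ P.complex.X 0) => t x) (P.complex.d_comp_d 2 1 0)
  have hmem : ∀ x : P.complex.X 1, u₀' (d₁' x) ∈ LinearMap.range i' := by
    intro x
    rw [hker', LinearMap.mem_ker, hu₀e, hd₁π₀, map_zero]
  -- the cocycle v
  let eqv : Y ≃ₗ[Λ] LinearMap.range i' := LinearEquiv.ofInjective i' hi'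
  let cr : (P.complex.X 1 : Type) →ₗ[Λ] LinearMap.range i' :=
    LinearMap.codRestrict (LinearMap.range i') (u₀' ∘ₗ d₁') hmem
  let v : (P.complex.X 1 : Type) →ₗ[Λ] Y := (eqv.symm : LinearMap.range i' →ₗ[Λ] Y) ∘ₗ cr
  have hv : ∀ x, i' (v x) = u₀' (d₁' x) := by
    intro x
    have h3 : eqv (v x) = cr x := eqv.apply_symm_apply _
    have h4 : (eqv (v x) : E) = i' (v x) := by simp [eqv]
    rw [← h4, h3]
    rfl
  have hvd : ∀ x, v (d₂' x) = 0 := by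
    intro x
    apply hi'
    rw [hv, hdd, map_zero, map_zero]
  -- v as an element of the Hom complex, killed by the differential
  let vmor : P.complex.X 1 ⟶ 𝕐 := ModuleCat.ofHom v
  have hg0 : (K.sc' 0 1 2).g vmor = 0 := by
    show (K.d 1 2) vmor = 0
    rw [ChainComplex.linearYonedaObj_d]
    show P.complex.d 2 1 ≫ vmor = 0
    ext x
    exact hvd x
  obtain ⟨w, hw⟩ := (ShortComplex.moduleCat_exact_iff _).1 hexact vmor hg0
  let w' : (P.complex.X 0 : Type) →ₗ[Λ] Y := w.hom
  have hw' : ∀ x, w' (d₁' x) = v x := by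
    intro x
    have : (K.d 0 1) w = vmor := hw
    rw [ChainComplex.linearYonedaObj_d] at this
    exact congrArg (fun (t : P.complex.X 1 ⟶ 𝕐) => t x) this
  -- kernel of π₀ equals range of d₁
  have hS0 : (ShortComplex.mk (P.complex.d 1 0) π₀ P.complex_d_comp_π_f_zero).Exact :=
    ShortComplex.exact_of_g_is_cokernel _ P.isColimitCokernelCofork
  have hrk : LinearMap.range d₁' = LinearMap.ker π₀' := hS0.moduleCat_range_eq_ker
  -- factor u₀ - i' ∘ w through π₀
  have hπ₀surj : Function.Surjective π₀' := by
    have : Epi π₀ := inferInstanceAs (Epi (P.π.f 0))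
    exact (ModuleCat.epi_iff_surjective π₀).1 this
  obtain ⟨h, hh⟩ := aux_exists_factor Λ π₀' (u₀' - i' ∘ₗ w') hπ₀surj (by
    intro x hx
    rw [LinearMap.mem_ker] at hx
    obtain ⟨q, hq⟩ : x ∈ LinearMap.range d₁' := by rw [hrk, LinearMap.mem_ker]; exact hx
    rw [LinearMap.mem_ker, LinearMap.sub_apply, LinearMap.comp_apply, ← hq, hw', hv,
      sub_self])
  refine ⟨h, ?_⟩
  ext t
  obtain ⟨x, rfl⟩ := hπ₀surj t
  have h5 : h (π₀' x) = u₀' x - i' (w' x) := by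
    have := congrArg (fun (t : (P.complex.X 0 : Type) →ₗ[Λ] E) => t x) hh
    simpa using this
  have h6 : p' (i' (w' x)) = 0 := by
    have : i' (w' x) ∈ LinearMap.ker p' := by rw [← hker']; exact ⟨w' x, rfl⟩
    exact this
  simp only [LinearMap.comp_apply, h5, map_sub, h6, sub_zero, hu₀e]

/-- Lifting property extended to `add T`-summands. -/
lemma aux_lift_of_summand (T W Y E Z : Type) [AddCommGroup T] [Module Λ T]
    [AddCommGroup W] [Module Λ W] [AddCommGroup Y] [Module Λ Y]
    [AddCommGroup E] [Module Λ E] [AddCommGroup Z] [Module Λ Z]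
    (hext : Subsingleton (ext1 Λ (ModuleCat.of Λ T) (ModuleCat.of Λ Y)))
    (hW : IsAddSummand Λ T W)
    (i' : Y →ₗ[Λ] E) (p' : E →ₗ[Λ] Z) (hi' : Function.Injective i')
    (hp' : Function.Surjective p')
    (hker' : LinearMap.range i' = LinearMap.ker p') (u : W →ₗ[Λ] Z) :
    ∃ h : W →ₗ[Λ] E, p' ∘ₗ h = u := by
  classical
  have base := aux_lift_of_ext1_vanish Λ T Y E Z hext i' p' hi' hp' hker'
  have hpi : ∀ (n : ℕ) (u₁ : (Fin n → T) →ₗ[Λ] Z),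
      ∃ h : (Fin n → T) →ₗ[Λ] E, p' ∘ₗ h = u₁ := by
    intro n u₁
    choose hj hhj using fun j : Fin n =>
      base (u₁ ∘ₗ LinearMap.single Λ (fun _ : Fin n => T) j)
    refine ⟨∑ j, hj j ∘ₗ LinearMap.proj j, ?_⟩
    apply LinearMap.ext
    intro x
    have h1 : (p' ∘ₗ ∑ j, hj j ∘ₗ LinearMap.proj j) x
        = ∑ j, p' ((hj j) (x j)) := by
      simp [LinearMap.sum_apply, map_sum]
    rw [h1]
    have h2 : ∀ j, p' ((hj j) (x j)) = u₁ (Pi.single j (x j)) := by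
      intro j
      have := congrArg (fun (t : T →ₗ[Λ] Z) => t (x j)) (hhj j)
      simpa using this
    simp only [h2]
    rw [← map_sum]
    congr 1
    exact Finset.univ_sum_single x
  obtain ⟨n, ι, ρ, hρι⟩ := hW
  obtain ⟨h₀, hh₀⟩ := hpi n (u ∘ₗ ρ)
  refine ⟨h₀ ∘ₗ ι, ?_⟩
  calc p' ∘ₗ (h₀ ∘ₗ ι) = (p' ∘ₗ h₀) ∘ₗ ι := by rw [LinearMap.comp_assoc]
  _ = (u ∘ₗ ρ) ∘ₗ ι := by rw [hh₀]
  _ = u ∘ₗ (ρ ∘ₗ ι) := by rw [LinearMap.comp_assoc]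
  _ = u := by rw [hρι, LinearMap.comp_id]

set_option synthInstance.maxHeartbeats 1000000 in
set_option maxHeartbeats 1600000 in
/-- If `0 → Y → T' → X → 0` is non-split and `Ext¹(X,Y)` is one-dimensional, then every
endomorphism of `Y` is a scalar plus a map factoring through `i`. -/
lemma aux_end_decomp (X T' Y : Type) [AddCommGroup X] [Module Λ X]
    [AddCommGroup T'] [Module Λ T'] [AddCommGroup Y] [Module Λ Y]
    (i : Y →ₗ[Λ] T') (f : T' →ₗ[Λ] X) (hi : Function.Injective i)
    (hf : Function.Surjective f) (hker : LinearMap.range i = LinearMap.ker f)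
    (hnosplit : ¬ ∃ s : X →ₗ[Λ] T', f ∘ₗ s = LinearMap.id)
    (hdim : finrank ℂ (ext1 Λ (ModuleCat.of Λ X) (ModuleCat.of Λ Y)) = 1)
    (ψ : Y →ₗ[Λ] Y) :
    ∃ (c : ℂ) (g : T' →ₗ[Λ] Y), ∀ y, ψ y = algebraMap ℂ Λ c • y + g (i y) := by
  classical
  set 𝕏 := ModuleCat.of Λ X with h𝕏
  set 𝕐 := ModuleCat.of Λ Y with h𝕐
  let P := ProjectiveResolution.of 𝕏
  let K := P.complex.linearYonedaObj ℂ 𝕐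
  let S := K.sc' 0 1 2
  -- comparison maps α₀, α₁
  haveI hfepi : Epi (ModuleCat.ofHom f : ModuleCat.of Λ T' ⟶ 𝕏) :=
    (ModuleCat.epi_iff_surjective _).2 hf
  let π₀ : P.complex.X 0 ⟶ 𝕏 := P.π.f 0
  let α₀ : P.complex.X 0 ⟶ ModuleCat.of Λ T' :=
    Projective.factorThru π₀ (ModuleCat.ofHom f)
  have hα₀c : α₀ ≫ ModuleCat.ofHom f = π₀ := Projective.factorThru_comp _ _
  let π₀' : (P.complex.X 0 : Type) →ₗ[Λ] X := π₀.hom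
  let α₀' : (P.complex.X 0 : Type) →ₗ[Λ] T' := α₀.hom
  let d₁' : (P.complex.X 1 : Type) →ₗ[Λ] (P.complex.X 0 : Type) := (P.complex.d 1 0).hom
  let d₂' : (P.complex.X 2 : Type) →ₗ[Λ] (P.complex.X 1 : Type) := (P.complex.d 2 1).hom
  have hfα₀ : ∀ p, f (α₀' p) = π₀' p := by
    intro p
    exact congrArg (fun (t : P.complex.X 0 ⟶ 𝕏) => t p) hα₀c
  have hd₁π₀ : ∀ x, π₀' (d₁' x) = 0 := by
    intro x
    exact congrArg (fun (t : P.complex.X 1 ⟶ 𝕏) => t x) P.complex_d_comp_π_f_zero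
  have hdd : ∀ x, d₁' (d₂' x) = 0 := by
    intro x
    exact congrArg (fun (t : P.complex.X 2 ⟶ P.complex.X 0) => t x) (P.complex.d_comp_d 2 1 0)
  have hfi : ∀ y, f (i y) = 0 := by
    intro y
    have : i y ∈ LinearMap.ker f := hker ▸ LinearMap.mem_range_self i y
    exact this
  have hmem : ∀ x : P.complex.X 1, α₀' (d₁' x) ∈ LinearMap.range i := by
    intro x
    rw [hker, LinearMap.mem_ker, hfα₀, hd₁π₀]
  let eqv : Y ≃ₗ[Λ] LinearMap.range i := LinearEquiv.ofInjective i hi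
  let cr : (P.complex.X 1 : Type) →ₗ[Λ] LinearMap.range i :=
    LinearMap.codRestrict (LinearMap.range i) (α₀' ∘ₗ d₁') hmem
  let α₁ : (P.complex.X 1 : Type) →ₗ[Λ] Y := (eqv.symm : LinearMap.range i →ₗ[Λ] Y) ∘ₗ cr
  have hα₁ : ∀ x, i (α₁ x) = α₀' (d₁' x) := by
    intro x
    have h3 : eqv (α₁ x) = cr x := eqv.apply_symm_apply _
    have h4 : (eqv (α₁ x) : T') = i (α₁ x) := by simp [eqv]
    rw [← h4, h3]
    rfl
  have hα₁d : ∀ x, α₁ (d₂' x) = 0 := by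
    intro x
    apply hi
    rw [hα₁, hdd, map_zero, map_zero]
  -- exact sequence P₁ → P₀ → X gives ker π₀ = range d₁
  have hS0 : (ShortComplex.mk (P.complex.d 1 0) π₀ P.complex_d_comp_π_f_zero).Exact :=
    ShortComplex.exact_of_g_is_cokernel _ P.isColimitCokernelCofork
  have hrk : LinearMap.range d₁' = LinearMap.ker π₀' := hS0.moduleCat_range_eq_ker
  -- cocycles from endomorphisms of Y
  let mor : (Y →ₗ[Λ] Y) → (P.complex.X 1 ⟶ 𝕐) := fun ψ₁ =>
    ModuleCat.ofHom (ψ₁ ∘ₗ α₁ : (P.complex.X 1 : Type) →ₗ[Λ] Y)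
  have hπ₀surj : Function.Surjective π₀' := (ModuleCat.epi_iff_surjective π₀).1 (inferInstanceAs (Epi (P.π.f 0)))
  have hcocycle : ∀ (ψ₁ : Y →ₗ[Λ] Y), S.g (mor ψ₁) = 0 := by
    intro ψ₁
    show (K.d 1 2) _ = 0
    rw [ChainComplex.linearYonedaObj_d]
    show P.complex.d 2 1 ≫ mor ψ₁ = 0
    ext x
    show ψ₁ (α₁ (d₂' x)) = 0
    rw [hα₁d, map_zero]
  let elt : (Y →ₗ[Λ] Y) → LinearMap.ker S.g.hom := fun ψ₁ =>
    ⟨mor ψ₁, LinearMap.mem_ker.2 (hcocycle ψ₁)⟩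
  let Qt := (↥(LinearMap.ker S.g.hom) ⧸ LinearMap.range S.moduleCatToCycles)
  let cls : (Y →ₗ[Λ] Y) → Qt := fun ψ₁ => Submodule.Quotient.mk (elt ψ₁)
  -- Claim A: vanishing of the class means factoring through i
  have claimA : ∀ ψ₁ : Y →ₗ[Λ] Y, cls ψ₁ = 0 → ∃ g : T' →ₗ[Λ] Y, ψ₁ = g ∘ₗ i := by
    intro ψ₁ h0
    rw [Submodule.Quotient.mk_eq_zero] at h0
    obtain ⟨w, hw⟩ := h0
    have hwv : S.f w = mor ψ₁ := congrArg Subtype.val hw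
    let w' : (P.complex.X 0 : Type) →ₗ[Λ] Y := w.hom
    have hwd : ∀ x, w' (d₁' x) = ψ₁ (α₁ x) := by
      intro x
      have : (K.d 0 1) w = _ := hwv
      rw [ChainComplex.linearYonedaObj_d] at this
      exact congrArg (fun (t : P.complex.X 1 ⟶ 𝕐) => t x) this
    let πmap : ((P.complex.X 0 : Type) × Y) →ₗ[Λ] T' := α₀'.coprod i
    have hπsurj : Function.Surjective πmap := by
      intro t
      obtain ⟨p, hp⟩ := hπ₀surj (f t)
      have : f (t - α₀' p) = 0 := by
        rw [map_sub, hfα₀, hp, sub_self]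
      obtain ⟨y, hy⟩ : t - α₀' p ∈ LinearMap.range i := by
        rw [hker, LinearMap.mem_ker]; exact this
      exact ⟨(p, y), by simp [πmap, LinearMap.coprod_apply, hy, add_comm]⟩
    have hle : LinearMap.ker πmap ≤ LinearMap.ker (w'.coprod ψ₁) := by
      rintro ⟨p, y⟩ hpy
      have hpy' : α₀' p + i y = 0 := hpy
      have hp0 : π₀' p = 0 := by
        have : f (α₀' p + i y) = 0 := by rw [hpy', map_zero]
        rw [map_add, hfα₀, hfi, add_zero] at this
        exact this
      obtain ⟨q, hq⟩ : p ∈ LinearMap.range d₁' := by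
        rw [hrk, LinearMap.mem_ker]; exact hp0
      have hyq : y = -α₁ q := by
        apply hi
        have : i y = -α₀' (d₁' q) := by
          rw [hq]
          exact eq_neg_of_add_eq_zero_right hpy'
        rw [map_neg, hα₁, this]
      show w' p + ψ₁ y = 0
      rw [← hq, hyq, hwd, map_neg, add_neg_cancel]
    obtain ⟨g, hg⟩ := aux_exists_factor Λ πmap (w'.coprod ψ₁) hπsurj hle
    refine ⟨g, ?_⟩
    ext y
    have := congrArg (fun (t : ((P.complex.X 0 : Type) × Y) →ₗ[Λ] Y) => t (0, y)) hg
    simpa [πmap, LinearMap.coprod_apply] using this.symm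
  -- Claim B: the class of the identity is nonzero
  have claimB : cls LinearMap.id ≠ 0 := by
    intro h0
    obtain ⟨g, hg⟩ := claimA LinearMap.id h0
    apply hnosplit
    have hle : LinearMap.ker f ≤ LinearMap.ker (LinearMap.id - i ∘ₗ g) := by
      intro t ht
      obtain ⟨y, hy⟩ : t ∈ LinearMap.range i := by rw [hker]; exact ht
      show t - i (g t) = 0
      rw [← hy]
      have : g (i y) = y := (LinearMap.congr_fun hg y).symm
      rw [this, sub_self]
    obtain ⟨s, hs⟩ := aux_exists_factor Λ f (LinearMap.id - i ∘ₗ g) hf hle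
    refine ⟨s, ?_⟩
    ext x
    obtain ⟨t, rfl⟩ := hf x
    have h5 : s (f t) = t - i (g t) := LinearMap.congr_fun hs t
    show f (s (f t)) = f t
    rw [h5, map_sub, hfi, sub_zero]
  -- dimension 1 transfer
  have hQdim : finrank ℂ Qt = 1 := by
    rw [← hdim]
    have iso1 : ext1 Λ 𝕏 𝕐 ≅ S.moduleCatLeftHomologyData.H :=
      (P.isoExt 1 𝕐) ≪≫
        ShortComplex.homologyMapIso
          ((HomologicalComplex.natIsoSc' (ModuleCat ℂ) (ComplexShape.up ℕ) 0 1 2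
            (by simp) (by simp)).app K) ≪≫ S.moduleCatHomologyIso
    exact (iso1.toLinearEquiv.finrank_eq).symm
  -- every class is a multiple of cls id
  obtain ⟨c, hc⟩ : ∃ c : ℂ, c • cls LinearMap.id = cls ψ := by
    have hspan := (finrank_eq_one_iff_of_nonzero (cls LinearMap.id) claimB).1 hQdim
    have : cls ψ ∈ Submodule.span ℂ {cls LinearMap.id} := by rw [hspan]; trivial
    exact Submodule.mem_span_singleton.1 this
  -- the corrected endomorphism
  let cI : Y →ₗ[Λ] Y :=
    { toFun := fun y => algebraMap ℂ Λ c • y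
      map_add' := fun a b => smul_add _ a b
      map_smul' := fun a y => by
        show algebraMap ℂ Λ c • a • y = a • algebraMap ℂ Λ c • y
        rw [smul_smul, smul_smul, Algebra.commutes] }
  have helt : elt (ψ - cI) = elt ψ - c • elt LinearMap.id := by
    apply Subtype.ext
    show mor (ψ - cI) = ((elt ψ : ↑S.X₂) - c • (elt LinearMap.id : ↑S.X₂))
    exact ModuleCat.hom_ext (LinearMap.ext fun x => rfl)
  have h9 : cls (ψ - cI) = cls ψ - c • cls LinearMap.id := by
    show (Submodule.Quotient.mk (elt (ψ - cI)) : Qt) =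
      (Submodule.Quotient.mk (elt ψ) : Qt) -
        c • (Submodule.Quotient.mk (elt LinearMap.id) : Qt)
    rw [helt, Submodule.Quotient.mk_sub, Submodule.Quotient.mk_smul]
  have hzero : cls (ψ - cI) = 0 := by
    rw [h9, ← hc, sub_self]
  obtain ⟨g, hg⟩ := claimA (ψ - cI) hzero
  refine ⟨c, g, fun y => ?_⟩
  have := LinearMap.congr_fun hg y
  simp only [LinearMap.sub_apply, LinearMap.comp_apply] at this
  have hcI : cI y = algebraMap ℂ Λ c • y := rfl
  rw [hcI] at this
  rw [← this]
  abel

end AuxHelpers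

/-- Let `Λ` be a finite-dimensional `ℂ`-algebra with symmetric `Ext¹` dimensions, and
`X, T` modules with `X ⊕ T` rigid and `X` indecomposable.  Let `f : T' → X` be a
surjective minimal right `add T`-approximation with kernel `Y` (included via `i`).
If `T ⊕ Y` is rigid and `Ext¹(X, Y)` is one-dimensional, then the short exact sequence
`0 → Y → T' → X → 0` is non-split, and it is the unique non-split extension of `X` by
`Y` up to isomorphism of extensions (rescaling by a nonzero scalar). -/
theorem stmt_19 (Λ : Type) [Ring Λ] [Algebra ℂ Λ] [FiniteDimensional ℂ Λ]
    (hsym : ∀ M N : ModuleCat Λ, Module.Finite Λ M → Module.Finite Λ N →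
      finrank ℂ (ext1 Λ M N) = finrank ℂ (ext1 Λ N M))
    (X : Type) [AddCommGroup X] [Module Λ X] [Module.Finite Λ X]
    (T : Type) [AddCommGroup T] [Module Λ T] [Module.Finite Λ T]
    (T' : Type) [AddCommGroup T'] [Module Λ T']
    (Y : Type) [AddCommGroup Y] [Module Λ Y]
    -- `X ⊕ T` is rigid:
    (hrigid : Subsingleton (ext1 Λ (ModuleCat.of Λ (X × T)) (ModuleCat.of Λ (X × T))))
    -- `X` is indecomposable:
    (hX0 : Nontrivial X)
    (hindec : ∀ P P' : Submodule Λ X, IsCompl P P' → P = ⊥ ∨ P = ⊤)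
    -- the short exact sequence `0 → Y → T' → X → 0`:
    (i : Y →ₗ[Λ] T') (f : T' →ₗ[Λ] X)
    (hi : Function.Injective i) (hf : Function.Surjective f)
    (hker : LinearMap.range i = LinearMap.ker f)
    -- `f` is a minimal right `add T`-approximation:
    (hT' : IsAddSummand Λ T T')
    (happrox : ∀ (Z : Type) [AddCommGroup Z] [Module Λ Z], IsAddSummand Λ T Z →
      ∀ g : Z →ₗ[Λ] X, ∃ h : Z →ₗ[Λ] T', f ∘ₗ h = g)
    (hmin : ∀ e : T' →ₗ[Λ] T', f ∘ₗ e = f → Function.Bijective e)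
    -- `T ⊕ Y` is rigid:
    (hTY : Subsingleton (ext1 Λ (ModuleCat.of Λ (T × Y)) (ModuleCat.of Λ (T × Y))))
    -- `Ext¹(X, Y)` is one-dimensional:
    (hdim : finrank ℂ (ext1 Λ (ModuleCat.of Λ X) (ModuleCat.of Λ Y)) = 1) :
    (¬ ∃ s : X →ₗ[Λ] T', f ∘ₗ s = LinearMap.id) ∧
      ∀ (E : Type) [AddCommGroup E] [Module Λ E] (i' : Y →ₗ[Λ] E) (p' : E →ₗ[Λ] X),
        Function.Injective i' → Function.Surjective p' →
        LinearMap.range i' = LinearMap.ker p' →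
        (¬ ∃ s : X →ₗ[Λ] E, p' ∘ₗ s = LinearMap.id) →
        ∃ (c : ℂ) (φ : E ≃ₗ[Λ] T'), c ≠ 0 ∧
          (∀ y : Y, φ (i' y) = algebraMap ℂ Λ c • i y) ∧
          f ∘ₗ (φ : E →ₗ[Λ] T') = p' := by
  classical
  -- `Y` is nontrivial
  have hYnt : Nontrivial Y := by
    by_contra hns
    rw [not_nontrivial_iff_subsingleton] at hns
    have h1 : Subsingleton (ModuleCat.of Λ Y) := hns
    have h2 := aux_ext1_subsingleton_of_right Λ (ModuleCat.of Λ X) (ModuleCat.of Λ Y) h1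
    haveI := h2
    have h3 : finrank ℂ (ext1 Λ (ModuleCat.of Λ X) (ModuleCat.of Λ Y)) = 0 :=
      Module.finrank_zero_of_subsingleton
    rw [h3] at hdim
    exact one_ne_zero hdim.symm
  -- part 1 : the sequence does not split
  have part1 : ¬ ∃ s : X →ₗ[Λ] T', f ∘ₗ s = LinearMap.id := by
    rintro ⟨s, hs⟩
    obtain ⟨y, hy⟩ := exists_ne (0 : Y)
    have hbij := hmin (s ∘ₗ f) (by
      rw [← LinearMap.comp_assoc, hs, LinearMap.id_comp])
    have h0 : f (i y) = 0 := by
      have : i y ∈ LinearMap.ker f := hker ▸ LinearMap.mem_range_self i y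
      exact this
    have h1 : (s ∘ₗ f) (i y) = (s ∘ₗ f) 0 := by
      simp [LinearMap.comp_apply, h0]
    have h2 : i y = 0 := hbij.1 h1
    exact hy (hi (by rw [h2, map_zero]))
  refine ⟨part1, ?_⟩
  intro E _ _ i' p' hi' hp' hker' hnsE
  -- Ext¹(T, Y) = 0 from rigidity of T ⊕ Y
  have hextT_TY : Subsingleton (ext1 Λ (ModuleCat.of Λ T) (ModuleCat.of Λ (T × Y))) := by
    refine aux_ext1_retract_left Λ (ModuleCat.ofHom (LinearMap.inl Λ T Y))
      (ModuleCat.ofHom (LinearMap.fst Λ T Y)) ?_ hTY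
    ext x
    rfl
  have hextTY : Subsingleton (ext1 Λ (ModuleCat.of Λ T) (ModuleCat.of Λ Y)) := by
    refine aux_ext1_retract_right Λ (ModuleCat.ofHom (LinearMap.inr Λ T Y))
      (ModuleCat.ofHom (LinearMap.snd Λ T Y)) ?_ hextT_TY
    ext x
    rfl
  -- lift f along p'
  obtain ⟨h, hh⟩ := aux_lift_of_summand Λ T T' Y E X hextTY hT' i' p' hi' hp' hker' f
  have hhe : ∀ t, p' (h t) = f t := fun t => LinearMap.congr_fun hh t
  -- h maps Y into Y
  have hmemh : ∀ y, h (i y) ∈ LinearMap.range i' := by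
    intro y
    rw [hker', LinearMap.mem_ker, hhe]
    have : i y ∈ LinearMap.ker f := hker ▸ LinearMap.mem_range_self i y
    exact this
  let eqv' : Y ≃ₗ[Λ] LinearMap.range i' := LinearEquiv.ofInjective i' hi'
  let ψ : Y →ₗ[Λ] Y := (eqv'.symm : LinearMap.range i' →ₗ[Λ] Y) ∘ₗ
    LinearMap.codRestrict (LinearMap.range i') (h ∘ₗ i) hmemh
  have hψ : ∀ y, i' (ψ y) = h (i y) := by
    intro y
    have h3 : eqv' (ψ y) = LinearMap.codRestrict (LinearMap.range i') (h ∘ₗ i) hmemh y :=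
      eqv'.apply_symm_apply _
    have h4 : (eqv' (ψ y) : E) = i' (ψ y) := by simp [eqv']
    rw [← h4, h3]
    rfl
  -- decompose ψ
  obtain ⟨c₀, g, hcg⟩ := aux_end_decomp Λ X T' Y i f hi hf hker part1 hdim ψ
  let h₂ : T' →ₗ[Λ] E := h - i' ∘ₗ g
  have hp'i' : ∀ y, p' (i' y) = 0 := by
    intro y
    have : i' y ∈ LinearMap.ker p' := hker' ▸ LinearMap.mem_range_self i' y
    exact this
  have hh₂i : ∀ y, h₂ (i y) = algebraMap ℂ Λ c₀ • i' y := by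
    intro y
    show h (i y) - i' (g (i y)) = algebraMap ℂ Λ c₀ • i' y
    rw [← hψ, ← map_sub, hcg y, add_sub_cancel_right, map_smul]
  have hp'h₂ : ∀ t, p' (h₂ t) = f t := by
    intro t
    show p' (h t - i' (g t)) = f t
    rw [map_sub, hhe, hp'i', sub_zero]
  -- c₀ ≠ 0
  have hc₀ : c₀ ≠ 0 := by
    intro hc0
    apply hnsE
    have hle : LinearMap.ker f ≤ LinearMap.ker h₂ := by
      intro t ht
      obtain ⟨y, hy⟩ : t ∈ LinearMap.range i := by rw [hker]; exact ht
      rw [LinearMap.mem_ker, ← hy, hh₂i, hc0, map_zero, zero_smul]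
    obtain ⟨k, hk⟩ := aux_exists_factor Λ f h₂ hf hle
    refine ⟨k, ?_⟩
    ext x
    obtain ⟨t, rfl⟩ := hf x
    have h5 : k (f t) = h₂ t := LinearMap.congr_fun hk t
    show p' (k (f t)) = f t
    rw [h5, hp'h₂]
  have hscalE : ∀ m : E, algebraMap ℂ Λ c₀ • algebraMap ℂ Λ c₀⁻¹ • m = m := by
    intro m
    rw [smul_smul, ← map_mul, mul_inv_cancel₀ hc₀, map_one, one_smul]
  have hscalE' : ∀ m : E, algebraMap ℂ Λ c₀⁻¹ • algebraMap ℂ Λ c₀ • m = m := by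
    intro m
    rw [smul_smul, ← map_mul, inv_mul_cancel₀ hc₀, map_one, one_smul]
  have hscalY' : ∀ m : Y, algebraMap ℂ Λ c₀⁻¹ • algebraMap ℂ Λ c₀ • m = m := by
    intro m
    rw [smul_smul, ← map_mul, inv_mul_cancel₀ hc₀, map_one, one_smul]
  -- h₂ is bijective
  have hinj : Function.Injective h₂ := by
    intro t t' htt
    have htt' : h₂ (t - t') = 0 := by rw [map_sub, htt, sub_self]
    have hft : f (t - t') = 0 := by rw [← hp'h₂, htt', map_zero]
    obtain ⟨y, hy⟩ : t - t' ∈ LinearMap.range i := by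
      rw [hker, LinearMap.mem_ker]; exact hft
    have h6 : i' (algebraMap ℂ Λ c₀ • y) = 0 := by
      rw [map_smul, ← hh₂i, hy, htt']
    have h7 : algebraMap ℂ Λ c₀ • y = 0 := by
      apply hi'
      rw [h6, map_zero]
    have h8 : y = 0 := by
      have := congrArg (fun z => algebraMap ℂ Λ c₀⁻¹ • z) h7
      simpa [hscalY'] using this
    have : t - t' = 0 := by rw [← hy, h8, map_zero]
    exact sub_eq_zero.1 this
  have hsurj : Function.Surjective h₂ := by
    intro e
    obtain ⟨t₀, ht₀⟩ := hf (p' e)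
    have : p' (e - h₂ t₀) = 0 := by rw [map_sub, hp'h₂, ht₀, sub_self]
    obtain ⟨y, hy⟩ : e - h₂ t₀ ∈ LinearMap.range i' := by
      rw [hker', LinearMap.mem_ker]; exact this
    refine ⟨t₀ + i (algebraMap ℂ Λ c₀⁻¹ • y), ?_⟩
    rw [map_add, hh₂i, map_smul, hscalE, hy]
    abel
  -- assemble the equivalence
  let Φ : T' ≃ₗ[Λ] E := LinearEquiv.ofBijective h₂ ⟨hinj, hsurj⟩
  refine ⟨c₀⁻¹, Φ.symm, inv_ne_zero hc₀, ?_, ?_⟩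
  · intro y
    have h10 : h₂ (algebraMap ℂ Λ c₀⁻¹ • i y) = i' y := by
      rw [map_smul, hh₂i, hscalE']
    have h11 : Φ (algebraMap ℂ Λ c₀⁻¹ • i y) = i' y := h10
    rw [← h11, LinearEquiv.symm_apply_apply]
  · ext e
    have h12 : h₂ (Φ.symm e) = e := Φ.apply_symm_apply e
    show f (Φ.symm e) = p' e
    rw [← hp'h₂, h12]
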